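/- Every direct summand of a Rad-supplementing module is Rad-supplementing. -/

import Mathlib

universe u v

/-- The radical of a module: the intersection of all maximal submodules. -/
def moduleRad (R : Type u) [Ring R] (M : Type v) [AddCommGroup M] [Module R M] :
    Submodule R M :=
  sInf {m : Submodule R M | IsCoatom m}

/-- `V` is a Rad-supplement of `U` in the ambient module: `U + V = ⊤` and
`U ⊓ V ≤ Rad V` (viewed inside the ambient module). -/
def IsRadSupplementOf (R : Type u) [Ring R] {N : Type v} [AddCommGroup N] [Module R N]
    (U V : Submodule R N) : Prop :=
  U ⊔ V = ⊤ ∧ U ⊓ V ≤ Submodule.map V.subtype (moduleRad R V)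

/-- `M` is Rad-supplementing: in every module containing it (i.e. every embedding into a
module `N`), its image has a Rad-supplement. -/
def IsRadSupplementing (R : Type u) [Ring R] (M : Type v) [AddCommGroup M] [Module R M] :
    Prop :=
  ∀ (N : ModuleCat.{v} R) (f : M →ₗ[R] N), Function.Injective f →
    ∃ V : Submodule R N, IsRadSupplementOf R (LinearMap.range f) V

lemma map_moduleRad_le {R : Type u} [Ring R] {M₁ : Type v} {M₂ : Type v}
    [AddCommGroup M₁] [Module R M₁] [AddCommGroup M₂] [Module R M₂]
    (f : M₁ →ₗ[R] M₂) (hf : Function.Surjective f) :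
    Submodule.map f (moduleRad R M₁) ≤ moduleRad R M₂ := by
  refine le_sInf fun m hm => ?_
  rw [Submodule.map_le_iff_le_comap]
  refine sInf_le ?_
  have hrange : LinearMap.range f = ⊤ := LinearMap.range_eq_top.2 hf
  constructor
  · intro htop
    apply hm.1
    rw [eq_top_iff]
    rintro x -
    obtain ⟨y, rfl⟩ := hf x
    have : y ∈ Submodule.comap f m := htop ▸ Submodule.mem_top
    exact this
  · intro x hx
    have hker : LinearMap.ker f ≤ Submodule.comap f m := by
      intro y hy
      simp [Submodule.mem_comap, LinearMap.mem_ker.1 hy]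
    have h1 : m ≤ Submodule.map f x := by
      have : m = Submodule.map f (Submodule.comap f m) := by
        rw [Submodule.map_comap_eq, hrange, top_inf_eq]
      rw [this]
      exact Submodule.map_mono hx.le
    have hx' : Submodule.comap f (Submodule.map f x) = x := by
      rw [Submodule.comap_map_eq, sup_eq_left.2 (le_trans hker hx.le)]
    have h2 : m ≠ Submodule.map f x := by
      intro h
      rw [← h, ] at hx'
      exact hx.ne hx'
    have : Submodule.map f x = ⊤ := hm.2 _ (lt_of_le_of_ne h1 h2)
    rw [← hx', this, Submodule.comap_top]

/-- Every direct summand of a Rad-supplementing module is Rad-supplementing. -/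
theorem directSummand_isRadSupplementing
    (R : Type u) [Ring R] (M : Type v) [AddCommGroup M] [Module R M]
    (hM : IsRadSupplementing R M) (A B : Submodule R M) (hAB : IsCompl A B) :
    IsRadSupplementing R A := by
  intro N f hf
  -- projections onto A and B
  set p : M →ₗ[R] A := Submodule.projectionOnto A B hAB with hp
  set q : M →ₗ[R] B := Submodule.projectionOnto B A hAB.symm with hq
  -- embed M into N × B
  set g : M →ₗ[R] (N × B) := LinearMap.prod (f.comp p) q with hg
  have hginj : Function.Injective g := by
    rw [← LinearMap.ker_eq_bot]
    rw [eq_bot_iff]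
    intro m hm
    simp only [LinearMap.mem_ker, hg, LinearMap.prod_apply, Function.prod, Prod.mk_eq_zero,
      LinearMap.comp_apply] at hm
    have h1 : p m = 0 := by
      have := hm.1
      have : f (p m) = f 0 := by simpa using this
      exact hf this
    have h2 : q m = 0 := hm.2
    have := Submodule.projection_add_projection_eq_self hAB m
    rw [← this]
    simp [← Submodule.coe_projectionOnto_apply, ← hp, ← hq, h1, h2]
  obtain ⟨V, hVsup, hVinf⟩ := hM (ModuleCat.of R (N × B)) g hginj
  set π : (N × B) →ₗ[R] N := LinearMap.fst R N B with hπ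
  refine ⟨Submodule.map π V, ?_, ?_⟩
  · -- sup condition
    have h1 : Submodule.map π (LinearMap.range g ⊔ V) = ⊤ := by
      rw [hVsup, Submodule.map_top, LinearMap.range_eq_top]
      exact fun x => ⟨(x, 0), rfl⟩
    rw [Submodule.map_sup] at h1
    have h2 : Submodule.map π (LinearMap.range g) = LinearMap.range f := by
      rw [← LinearMap.range_comp]
      have hcomp : π ∘ₗ g = f ∘ₗ p := by
        ext m
        simp [hg, hπ]
      rw [hcomp, LinearMap.range_comp, Submodule.range_projectionOnto hAB,
        Submodule.map_top]
    rw [← h2, h1]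
  · rintro x ⟨hx1, hx2⟩
    obtain ⟨a, rfl⟩ := hx1
    obtain ⟨v, hvV, hvx⟩ := hx2
    have hvg : v ∈ LinearMap.range g := by
      refine ⟨(a : M) + ((v.2 : B) : M), ?_⟩
      have h1 : p ((a : M) + ((v.2 : B) : M)) = a := by
        simp [hp, Submodule.projectionOnto_apply_left,
          Submodule.projectionOnto_apply_right]
      have h2 : q ((a : M) + ((v.2 : B) : M)) = v.2 := by
        simp [hq, Submodule.projectionOnto_apply_left,
          Submodule.projectionOnto_apply_right]
      have hgv : g ((a : M) + ((v.2 : B) : M)) = (f a, v.2) := by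
        simp [hg, h1, h2]
      rw [hgv]
      exact Prod.ext (by simpa [hπ] using hvx.symm) rfl
    obtain ⟨w, hw, hwv⟩ := hVinf ⟨hvg, hvV⟩
    refine ⟨π.submoduleMap V w,
      map_moduleRad_le _ (π.submoduleMap_surjective V) ⟨w, hw, rfl⟩, ?_⟩
    show ((π.submoduleMap V w : _) : N) = f a
    rw [LinearMap.submoduleMap_coe_apply]
    exact (congrArg π hwv).trans hvx
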